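/- Consider the X3C-reduction house allocation instance constructed from an Exact 3-Set Cover instance. If this instance admits a proportional assignment, then there exist k = N/3 subsets among S_1, ..., S_M whose union is the entire universe V. -/

import Mathlib

/-- Utility function of the X3C-reduction instance: the universe is `Fin N`,
the `M` size-3 subsets are given by their ordered elements `e j 0, e j 1, e j 2`.
With `T = 100 * (M + N)` and `C = 8 * T + 8 * N - 19`, the agents are
`Fin N ⊕ Fin T` (`Sum.inl i` is `a_i`, `Sum.inr i` is `a*_i`) and the houses are
`(Fin M × Fin 3) ⊕ Fin T` (`Sum.inl (j, ℓ)` is `h^ℓ_j`, `Sum.inr j` is `h*_j`). -/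
def xUtil (N M : ℕ) (e : Fin M → Fin 3 → Fin N) :
    Fin N ⊕ Fin (100 * (M + N)) → (Fin M × Fin 3) ⊕ Fin (100 * (M + N)) → ℕ
  | Sum.inl i, Sum.inl (j, ℓ) =>
      if e j ℓ = i then 8 * (100 * (M + N))
      else if e j (ℓ + 1) = i then 6 * (100 * (M + N)) - (j.val + 1)
      else if e j (ℓ + 2) = i then 5 * (100 * (M + N)) + (j.val + 1)
      else 0
  | Sum.inl _, Sum.inr _ => 8 * (100 * (M + N)) + 8 * N - 19
  | Sum.inr _, Sum.inl _ => 0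
  | Sum.inr _, Sum.inr _ => 1

/-- Agent `a` is proportional in assignment `φ`: her utility for her own house
is at least `1/n` times her total utility for all assigned houses. -/
def propAgent {A H : Type*} [Fintype A] (u : A → H → ℕ) (φ : A → H) (a : A) : Prop :=
  ((u a (φ a) : ℝ)) ≥ (1 / (Fintype.card A : ℝ)) * ∑ a' : A, (u a (φ a') : ℝ)

/-- If the X3C-reduction instance admits a proportional assignment, then some
`N/3` of the subsets cover the whole universe. -/
private lemma fin3_ne : ∀ ℓ : Fin 3, ℓ ≠ ℓ + 1 ∧ ℓ ≠ ℓ + 2 ∧ ℓ + 1 ≠ ℓ + 2 := by decide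

private lemma fin3_cases : ∀ ℓ ℓ' : Fin 3, ℓ' = ℓ ∨ ℓ' = ℓ + 1 ∨ ℓ' = ℓ + 2 := by decide

private lemma fin3_shift : ∀ a b : Fin 3, a + 2 = b + 1 → a = b + 2 := by decide

private lemma fin3_22 : ∀ a : Fin 3, a + 2 + 2 = a + 1 := by decide

private lemma xUtil_inl_inl (N M : ℕ) (e : Fin M → Fin 3 → Fin N) (i : Fin N) (p : Fin M × Fin 3) :
    xUtil N M e (Sum.inl i) (Sum.inl p) =
      if e p.1 p.2 = i then 8 * (100 * (M + N))
      else if e p.1 (p.2 + 1) = i then 6 * (100 * (M + N)) - (p.1.val + 1)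
      else if e p.1 (p.2 + 2) = i then 5 * (100 * (M + N)) + (p.1.val + 1)
      else 0 := by
  obtain ⟨j, ℓ⟩ := p
  rfl

private lemma xUtil_inl_inl' (N M : ℕ) (e : Fin M → Fin 3 → Fin N) (i : Fin N)
    (j : Fin M) (ℓ : Fin 3) :
    xUtil N M e (Sum.inl i) (Sum.inl (j, ℓ)) =
      if e j ℓ = i then 8 * (100 * (M + N))
      else if e j (ℓ + 1) = i then 6 * (100 * (M + N)) - (j.val + 1)
      else if e j (ℓ + 2) = i then 5 * (100 * (M + N)) + (j.val + 1)
      else 0 := rfl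

private lemma xUtil_inl_inr (N M : ℕ) (e : Fin M → Fin 3 → Fin N) (i : Fin N)
    (s : Fin (100 * (M + N))) :
    xUtil N M e (Sum.inl i) (Sum.inr s) = 8 * (100 * (M + N)) + 8 * N - 19 := rfl

private lemma xUtil_inr_inl (N M : ℕ) (e : Fin M → Fin 3 → Fin N) (t : Fin (100 * (M + N)))
    (p : Fin M × Fin 3) : xUtil N M e (Sum.inr t) (Sum.inl p) = 0 := by
  obtain ⟨j, ℓ⟩ := p; rfl

private lemma xUtil_inr_inr (N M : ℕ) (e : Fin M → Fin 3 → Fin N) (t s : Fin (100 * (M + N))) :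
    xUtil N M e (Sum.inr t) (Sum.inr s) = 1 := rfl
theorem proportional_to_x3c (N M : ℕ) (hN : 3 ∣ N)
    (e : Fin M → Fin 3 → Fin N) (hinj : ∀ j, Function.Injective (e j))
    (hprop : ∃ φ : Fin N ⊕ Fin (100 * (M + N)) → (Fin M × Fin 3) ⊕ Fin (100 * (M + N)),
      Function.Injective φ ∧ ∀ a, propAgent (xUtil N M e) φ a) :
    ∃ P : Finset (Fin M), P.card = N / 3 ∧
      ∀ i : Fin N, ∃ j ∈ P, ∃ ℓ : Fin 3, e j ℓ = i := by
  classical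
  obtain ⟨φ, hφinj, hφprop⟩ := hprop
  rcases Nat.eq_zero_or_pos N with hN0 | hNpos
  · subst hN0
    exact ⟨∅, by simp, fun i => i.elim0⟩
  -- key product identity, avoiding ℕ-subtraction trouble
  have hC : 100 * (M + N) * (8 * (100 * (M + N)) + 8 * N - 19) + 19 * (100 * (M + N))
      = 8 * (100 * (M + N)) * (100 * (M + N)) + 8 * N * (100 * (M + N)) := by
    have h19 : 8 * (100 * (M + N)) + 8 * N - 19 + 19 = 8 * (100 * (M + N)) + 8 * N := by omega
    calc 100 * (M + N) * (8 * (100 * (M + N)) + 8 * N - 19) + 19 * (100 * (M + N))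
        = 100 * (M + N) * ((8 * (100 * (M + N)) + 8 * N - 19) + 19) := by ring
      _ = 100 * (M + N) * (8 * (100 * (M + N)) + 8 * N) := by rw [h19]
      _ = 8 * (100 * (M + N)) * (100 * (M + N)) + 8 * N * (100 * (M + N)) := by ring
  have hcardA : Fintype.card (Fin N ⊕ Fin (100 * (M + N))) = N + 100 * (M + N) := by simp
  -- convert proportionality to a ℕ inequality
  have hkey : ∀ a, (∑ a' : Fin N ⊕ Fin (100 * (M + N)), xUtil N M e a (φ a'))
      ≤ (N + 100 * (M + N)) * xUtil N M e a (φ a) := by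
    intro a
    have h := hφprop a
    unfold propAgent at h
    rw [hcardA] at h
    have hpos : (0 : ℝ) < ((N + 100 * (M + N) : ℕ) : ℝ) := by
      have : 0 < N + 100 * (M + N) := by omega
      exact_mod_cast this
    rw [ge_iff_le, one_div, inv_mul_le_iff₀ hpos] at h
    have h2 : ((∑ a' : Fin N ⊕ Fin (100 * (M + N)), xUtil N M e a (φ a') : ℕ) : ℝ)
        ≤ (((N + 100 * (M + N)) * xUtil N M e a (φ a) : ℕ) : ℝ) := by
      push_cast at h ⊢
      convert h using 2
    exact_mod_cast h2
  -- some star house is assigned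
  have hstar_assigned : ∃ a s, φ a = Sum.inr s := by
    by_contra hcon
    push_neg at hcon
    have hall : ∀ a, ∃ p, φ a = Sum.inl p := by
      intro a
      cases h' : φ a with
      | inl p => exact ⟨p, rfl⟩
      | inr s => exact absurd h' (hcon a s)
    choose ψ hψ using hall
    have hψinj : Function.Injective ψ := by
      intro a b hab
      apply hφinj
      rw [hψ a, hψ b, hab]
    have := Fintype.card_le_of_injective ψ hψinj
    rw [hcardA, Fintype.card_prod, Fintype.card_fin, Fintype.card_fin] at this
    omega
  -- every star agent gets a star house
  have hstar : ∀ t : Fin (100 * (M + N)), ∃ s, φ (Sum.inr t) = Sum.inr s := by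
    intro t
    obtain ⟨a, s, ha⟩ := hstar_assigned
    have h1 : (1 : ℕ) ≤ ∑ a' : Fin N ⊕ Fin (100 * (M + N)), xUtil N M e (Sum.inr t) (φ a') := by
      calc (1 : ℕ) = xUtil N M e (Sum.inr t) (φ a) := by rw [ha, xUtil_inr_inr]
        _ ≤ ∑ a' : Fin N ⊕ Fin (100 * (M + N)), xUtil N M e (Sum.inr t) (φ a') :=
          Finset.single_le_sum (f := fun a' => xUtil N M e (Sum.inr t) (φ a'))
            (fun i _ => Nat.zero_le _) (Finset.mem_univ a)
    have h2 := hkey (Sum.inr t)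
    cases h' : φ (Sum.inr t) with
    | inl p =>
      rw [h', xUtil_inr_inl, Nat.mul_zero] at h2
      omega
    | inr s => exact ⟨s, rfl⟩
  choose f hf using hstar
  -- every real agent gets a set house
  have hreal : ∀ i : Fin N, ∃ p, φ (Sum.inl i) = Sum.inl p := by
    intro i
    cases h' : φ (Sum.inl i) with
    | inl p => exact ⟨p, rfl⟩
    | inr s =>
      exfalso
      have hfinj : Function.Injective f := by
        intro a b hab
        have hab2 : φ (Sum.inr a) = φ (Sum.inr b) := by rw [hf a, hf b, hab]
        exact Sum.inr_injective (hφinj hab2)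
      have hfsurj : Function.Surjective f := Finite.surjective_of_injective hfinj
      obtain ⟨t, ht⟩ := hfsurj s
      have : φ (Sum.inr t) = φ (Sum.inl i) := by rw [hf t, ht, h']
      exact nomatch (hφinj this)
  choose g hg using hreal
  have hginj : Function.Injective g := by
    intro a b hab
    have hab2 : φ (Sum.inl a) = φ (Sum.inl b) := by rw [hg a, hg b, hab]
    exact Sum.inl_injective (hφinj hab2)
  -- key inequality for real agents
  have key2 : ∀ i : Fin N,
      (∑ i' : Fin N, xUtil N M e (Sum.inl i) (Sum.inl (g i')))
        + 100 * (M + N) * (8 * (100 * (M + N)) + 8 * N - 19)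
      ≤ (N + 100 * (M + N)) * xUtil N M e (Sum.inl i) (Sum.inl (g i)) := by
    intro i
    have h := hkey (Sum.inl i)
    rw [Fintype.sum_sum_type] at h
    simp only [hg, hf, xUtil_inl_inr] at h
    rw [Finset.sum_const, Finset.card_univ, Fintype.card_fin, smul_eq_mul] at h
    exact h
  -- each real agent gets her own house (utility 8T)
  have hge : ∀ i : Fin N, e (g i).1 (g i).2 = i ∧
      xUtil N M e (Sum.inl i) (Sum.inl (g i)) = 8 * (100 * (M + N)) := by
    intro i
    by_cases hcase : e (g i).1 (g i).2 = i
    · refine ⟨hcase, ?_⟩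
      rw [xUtil_inl_inl, if_pos hcase]
    · exfalso
      have hub : xUtil N M e (Sum.inl i) (Sum.inl (g i)) ≤ 6 * (100 * (M + N)) := by
        rw [xUtil_inl_inl, if_neg hcase]
        have := (g i).1.isLt
        split_ifs <;> omega
      have h := key2 i
      have h3 : 100 * (M + N) * (8 * (100 * (M + N)) + 8 * N - 19)
          ≤ (N + 100 * (M + N)) * (6 * (100 * (M + N))) :=
        le_trans (le_trans (Nat.le_add_left _ _) h) (Nat.mul_le_mul_left _ hub)
      have ht : 100 ≤ 100 * (M + N) := by omega
      have hsq : 100 * (100 * (M + N)) ≤ 100 * (M + N) * (100 * (M + N)) :=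
        Nat.mul_le_mul_right _ ht
      nlinarith [h3, hC, hsq, ht]
  -- row sums bounded by 19T
  have key3 : ∀ i : Fin N,
      (∑ i' : Fin N, xUtil N M e (Sum.inl i) (Sum.inl (g i'))) ≤ 19 * (100 * (M + N)) := by
    intro i
    have h := key2 i
    rw [(hge i).2] at h
    nlinarith [h, hC]
  -- column sums are exactly 19T
  have hsum3 : ∀ (j : Fin M) (ℓ : Fin 3),
      (∑ i : Fin N, xUtil N M e (Sum.inl i) (Sum.inl (j, ℓ))) = 19 * (100 * (M + N)) := by
    intro j ℓ
    have hMT : j.val < M := j.isLt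
    have d1 : e j ℓ ≠ e j (ℓ + 1) := fun h => (fin3_ne ℓ).1 (hinj j h)
    have d2 : e j ℓ ≠ e j (ℓ + 2) := fun h => (fin3_ne ℓ).2.1 (hinj j h)
    have d3 : e j (ℓ + 1) ≠ e j (ℓ + 2) := fun h => (fin3_ne ℓ).2.2 (hinj j h)
    have step : ∀ i : Fin N, xUtil N M e (Sum.inl i) (Sum.inl (j, ℓ)) =
        (if e j ℓ = i then 8 * (100 * (M + N)) else 0)
        + ((if e j (ℓ + 1) = i then 6 * (100 * (M + N)) - (j.val + 1) else 0)
        + (if e j (ℓ + 2) = i then 5 * (100 * (M + N)) + (j.val + 1) else 0)) := by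
      intro i
      rw [xUtil_inl_inl']
      split_ifs <;> omega
    rw [Finset.sum_congr rfl (fun i _ => step i), Finset.sum_add_distrib, Finset.sum_add_distrib,
      Finset.sum_ite_eq, Finset.sum_ite_eq, Finset.sum_ite_eq]
    simp only [Finset.mem_univ, if_true]
    omega
  -- total double sum
  have htot : (∑ i : Fin N, ∑ i' : Fin N, xUtil N M e (Sum.inl i) (Sum.inl (g i')))
      = N * (19 * (100 * (M + N))) := by
    rw [Finset.sum_comm]
    have hcol : ∀ i' : Fin N, (∑ i : Fin N, xUtil N M e (Sum.inl i) (Sum.inl (g i')))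
        = 19 * (100 * (M + N)) := fun i' => hsum3 (g i').1 (g i').2
    rw [Finset.sum_congr rfl (fun i' _ => hcol i'), Finset.sum_const, Finset.card_univ,
      Fintype.card_fin, smul_eq_mul]
  -- hence each row sum is exactly 19T
  have rowEq : ∀ i : Fin N,
      (∑ i' : Fin N, xUtil N M e (Sum.inl i) (Sum.inl (g i'))) = 19 * (100 * (M + N)) := by
    intro i
    by_contra hne
    have hlt : (∑ i' : Fin N, xUtil N M e (Sum.inl i) (Sum.inl (g i'))) < 19 * (100 * (M + N)) :=
      lt_of_le_of_ne (key3 i) hne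
    have hstrict : (∑ i : Fin N, ∑ i' : Fin N, xUtil N M e (Sum.inl i) (Sum.inl (g i')))
        < ∑ _i : Fin N, 19 * (100 * (M + N)) :=
      Finset.sum_lt_sum (fun i _ => key3 i) ⟨i, Finset.mem_univ i, hlt⟩
    rw [htot, Finset.sum_const, Finset.card_univ, Fintype.card_fin, smul_eq_mul] at hstrict
    omega
  -- off-diagonal sums are exactly 11T
  have offdiag : ∀ i : Fin N,
      (∑ i' ∈ Finset.univ.erase i, xUtil N M e (Sum.inl i) (Sum.inl (g i')))
        = 11 * (100 * (M + N)) := by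
    intro i
    have h : xUtil N M e (Sum.inl i) (Sum.inl (g i))
        + (∑ i' ∈ Finset.univ.erase i, xUtil N M e (Sum.inl i) (Sum.inl (g i')))
        = ∑ i' : Fin N, xUtil N M e (Sum.inl i) (Sum.inl (g i')) :=
      Finset.add_sum_erase Finset.univ
        (fun i' => xUtil N M e (Sum.inl i) (Sum.inl (g i'))) (Finset.mem_univ i)
    rw [rowEq i, (hge i).2] at h
    omega
  -- dichotomy for off-diagonal entries
  have hdich : ∀ i' i₂ : Fin N, i₂ ≠ i' →
      xUtil N M e (Sum.inl i') (Sum.inl (g i₂)) = 0 ∨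
      (5 * (100 * (M + N)) + 1 ≤ xUtil N M e (Sum.inl i') (Sum.inl (g i₂)) ∧
       xUtil N M e (Sum.inl i') (Sum.inl (g i₂)) ≤ 6 * (100 * (M + N)) - 1) := by
    intro i' i₂ hne
    have hM : (g i₂).1.val < M := (g i₂).1.isLt
    rw [xUtil_inl_inl]
    have hb1 : e (g i₂).1 (g i₂).2 ≠ i' := by
      rw [(hge i₂).1]; exact hne
    rw [if_neg hb1]
    split_ifs
    · right; omega
    · right; omega
    · left; rfl
  -- key closure step: if house (j,ℓ) is used then house (j,ℓ+2) is used
  have stepG : ∀ (j : Fin M) (ℓ : Fin 3), (∃ i, g i = (j, ℓ)) → ∃ i, g i = (j, ℓ + 2) := by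
    rintro j ℓ ⟨i₀, hi₀⟩
    have hMT : j.val < M := j.isLt
    have hi₀e : e j ℓ = i₀ := by
      have h := (hge i₀).1
      rw [hi₀] at h
      exact h
    have hne : i₀ ≠ e j (ℓ + 1) := fun h => (fin3_ne ℓ).1 (hinj j (hi₀e.trans h))
    have hmem : i₀ ∈ Finset.univ.erase (e j (ℓ + 1)) :=
      Finset.mem_erase.mpr ⟨hne, Finset.mem_univ i₀⟩
    have hw0 : xUtil N M e (Sum.inl (e j (ℓ + 1))) (Sum.inl (g i₀))
        = 6 * (100 * (M + N)) - (j.val + 1) := by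
      rw [hi₀, xUtil_inl_inl']
      rw [if_neg (fun h => (fin3_ne ℓ).1 (hinj j h)), if_pos rfl]
    have hsplit2 : (∑ i₂ ∈ Finset.univ.erase (e j (ℓ + 1)),
        xUtil N M e (Sum.inl (e j (ℓ + 1))) (Sum.inl (g i₂)))
        = xUtil N M e (Sum.inl (e j (ℓ + 1))) (Sum.inl (g i₀))
          + ∑ i₂ ∈ (Finset.univ.erase (e j (ℓ + 1))).erase i₀,
            xUtil N M e (Sum.inl (e j (ℓ + 1))) (Sum.inl (g i₂)) :=
      (Finset.add_sum_erase _
        (fun i₂ => xUtil N M e (Sum.inl (e j (ℓ + 1))) (Sum.inl (g i₂))) hmem).symm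
    have hrest : (∑ i₂ ∈ (Finset.univ.erase (e j (ℓ + 1))).erase i₀,
        xUtil N M e (Sum.inl (e j (ℓ + 1))) (Sum.inl (g i₂)))
        = 5 * (100 * (M + N)) + (j.val + 1) := by
      have ho := offdiag (e j (ℓ + 1))
      rw [hsplit2, hw0] at ho
      omega
    have hpos : (∑ i₂ ∈ (Finset.univ.erase (e j (ℓ + 1))).erase i₀,
        xUtil N M e (Sum.inl (e j (ℓ + 1))) (Sum.inl (g i₂))) ≠ 0 := by
      rw [hrest]; omega
    obtain ⟨i₁, hi₁mem, hi₁ne⟩ := Finset.exists_ne_zero_of_sum_ne_zero hpos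
    have hi₁ne' : i₁ ≠ e j (ℓ + 1) :=
      (Finset.mem_erase.mp (Finset.mem_of_mem_erase hi₁mem)).1
    have hlow : 5 * (100 * (M + N)) + 1
        ≤ xUtil N M e (Sum.inl (e j (ℓ + 1))) (Sum.inl (g i₁)) := by
      rcases hdich (e j (ℓ + 1)) i₁ hi₁ne' with h | h
      · exact absurd h hi₁ne
      · exact h.1
    have hrest2 : (∑ i₂ ∈ (Finset.univ.erase (e j (ℓ + 1))).erase i₀,
        xUtil N M e (Sum.inl (e j (ℓ + 1))) (Sum.inl (g i₂)))
        = xUtil N M e (Sum.inl (e j (ℓ + 1))) (Sum.inl (g i₁))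
          + ∑ i₂ ∈ ((Finset.univ.erase (e j (ℓ + 1))).erase i₀).erase i₁,
            xUtil N M e (Sum.inl (e j (ℓ + 1))) (Sum.inl (g i₂)) :=
      (Finset.add_sum_erase _
        (fun i₂ => xUtil N M e (Sum.inl (e j (ℓ + 1))) (Sum.inl (g i₂))) hi₁mem).symm
    have hzero : ∀ i₂ ∈ ((Finset.univ.erase (e j (ℓ + 1))).erase i₀).erase i₁,
        xUtil N M e (Sum.inl (e j (ℓ + 1))) (Sum.inl (g i₂)) = 0 := by
      intro i₂ hi₂
      have hi₂ne' : i₂ ≠ e j (ℓ + 1) := (Finset.mem_erase.mp (Finset.mem_of_mem_erase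
        (Finset.mem_of_mem_erase hi₂))).1
      have hterm : xUtil N M e (Sum.inl (e j (ℓ + 1))) (Sum.inl (g i₂))
          ≤ ∑ i₃ ∈ ((Finset.univ.erase (e j (ℓ + 1))).erase i₀).erase i₁,
            xUtil N M e (Sum.inl (e j (ℓ + 1))) (Sum.inl (g i₃)) :=
        Finset.single_le_sum
          (f := fun i₃ => xUtil N M e (Sum.inl (e j (ℓ + 1))) (Sum.inl (g i₃)))
          (fun _ _ => Nat.zero_le _) hi₂
      rcases hdich (e j (ℓ + 1)) i₂ hi₂ne' with h | h
      · exact h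
      · exfalso
        rw [hrest2] at hrest
        omega
    have hrest3 : (∑ i₃ ∈ ((Finset.univ.erase (e j (ℓ + 1))).erase i₀).erase i₁,
        xUtil N M e (Sum.inl (e j (ℓ + 1))) (Sum.inl (g i₃))) = 0 := Finset.sum_eq_zero hzero
    have hval : xUtil N M e (Sum.inl (e j (ℓ + 1))) (Sum.inl (g i₁))
        = 5 * (100 * (M + N)) + (j.val + 1) := by
      rw [hrest2, hrest3] at hrest
      omega
    have hM1 : (g i₁).1.val < M := (g i₁).1.isLt
    rw [xUtil_inl_inl] at hval
    have hb1 : e (g i₁).1 (g i₁).2 ≠ e j (ℓ + 1) := by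
      rw [(hge i₁).1]; exact hi₁ne'
    rw [if_neg hb1] at hval
    by_cases hb2 : e (g i₁).1 ((g i₁).2 + 1) = e j (ℓ + 1)
    · rw [if_pos hb2] at hval
      omega
    · rw [if_neg hb2] at hval
      by_cases hb3 : e (g i₁).1 ((g i₁).2 + 2) = e j (ℓ + 1)
      · rw [if_pos hb3] at hval
        have hj : (g i₁).1 = j := Fin.ext (by omega)
        rw [hj] at hb3
        have hl : (g i₁).2 + 2 = ℓ + 1 := hinj j hb3
        have hl2 : (g i₁).2 = ℓ + 2 := fin3_shift _ _ hl
        refine ⟨i₁, ?_⟩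
        rw [← hj, ← hl2]
      · rw [if_neg hb3] at hval
        omega
  -- closure under all shifts
  have closure : ∀ (j : Fin M) (ℓ ℓ' : Fin 3), (∃ i, g i = (j, ℓ)) → ∃ i, g i = (j, ℓ') := by
    intro j ℓ ℓ' h0
    have h2 := stepG j ℓ h0
    have h1 := stepG j (ℓ + 2) h2
    rw [fin3_22] at h1
    rcases fin3_cases ℓ ℓ' with h | h | h <;> rw [h]
    · exact h0
    · exact h1
    · exact h2
  -- build the cover
  refine ⟨(Finset.image g Finset.univ).image Prod.fst, ?_, ?_⟩
  · have hQcard : (Finset.image g Finset.univ).card = N := by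
      rw [Finset.card_image_of_injective _ hginj, Finset.card_univ, Fintype.card_fin]
    have hQP : Finset.image g Finset.univ
        = ((Finset.image g Finset.univ).image Prod.fst) ×ˢ (Finset.univ : Finset (Fin 3)) := by
      ext ⟨j, ℓ⟩
      simp only [Finset.mem_image, Finset.mem_univ, true_and, Finset.mem_product, and_true]
      constructor
      · rintro ⟨i, hi⟩
        exact ⟨(j, ℓ), ⟨i, hi⟩, rfl⟩
      · rintro ⟨⟨j₀, ℓ₀⟩, ⟨i, hi⟩, hfst⟩
        simp only at hfst
        subst hfst
        exact closure j₀ ℓ₀ ℓ ⟨i, hi⟩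
    have hcard3 := congrArg Finset.card hQP
    rw [Finset.card_product, Finset.card_univ, Fintype.card_fin] at hcard3
    omega
  · intro i
    refine ⟨(g i).1, ?_, (g i).2, (hge i).1⟩
    exact Finset.mem_image_of_mem Prod.fst (Finset.mem_image_of_mem g (Finset.mem_univ i))
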